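/- arXiv:1806.02282 — 4 statements merged into one kernel-verified Lean document; each statement's English description precedes it below -/
import Mathlib

section
/- Support property of the cost/reward ratio: let s = xy and s' = xyz be searches (z extending xy), and suppose ρ(z) ≥ ρ(y), where ρ(u) = (∑_{i∈u} w_i)/(∑_{i∈u} c_i) is the density of the support of u. Then J⁺(xy) ≥ min{J⁺(x), J⁺(xyz)}, where J⁺(s) = max{0, J(s)} and J(s) = (∑_{i=1}^{|s|} c_{s_i}(1 − ∑_{j<i} w_{s_j})) / (∑_{i∈s} w_{s_i}). -/
/-- Numerator of the cost/reward ratio: `∑_i c_{s_i} (1 - ∑_{j<i} w_{s_j})`,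
computed with an accumulator `W` for the weight of the elements already listed. -/
def searchNum {α : Type*} (w c : α → ℝ) : ℝ → List α → ℝ
  | _, [] => 0
  | W, a :: t => c a * (1 - W) + searchNum w c (W + w a) t

/-- The cost/reward ratio `J(s)`, with value `+∞` when the total weight of `s`
vanishes (in particular `J(∅) = +∞`). -/
noncomputable def Jval {α : Type*} (w c : α → ℝ) (s : List α) : EReal :=
  if (s.map w).sum = 0 then ⊤ else ((searchNum w c 0 s / (s.map w).sum : ℝ) : EReal)

/-- `J⁺ = max {0, J}`. -/
noncomputable def Jplus {α : Type*} (w c : α → ℝ) (s : List α) : EReal :=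
  max 0 (Jval w c s)

/-- Density of (the support of) a sequence. -/
noncomputable def densityL {α : Type*} (w c : α → ℝ) (s : List α) : ℝ :=
  (s.map w).sum / (s.map c).sum

lemma searchNum_shift {α : Type*} (w c : α → ℝ) (W : ℝ) (s : List α) :
    searchNum w c W s = searchNum w c 0 s - W * (s.map c).sum := by
  induction s generalizing W with
  | nil => simp [searchNum]
  | cons a t ih =>
    simp only [searchNum, List.map_cons, List.sum_cons]
    rw [ih (W + w a), ih (0 + w a)]
    ring

lemma searchNum_append {α : Type*} (w c : α → ℝ) (W : ℝ) (s t : List α) :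
    searchNum w c W (s ++ t) = searchNum w c W s + searchNum w c (W + (s.map w).sum) t := by
  induction s generalizing W with
  | nil => simp [searchNum]
  | cons a s ih =>
    simp only [List.cons_append, searchNum, List.map_cons, List.sum_cons]
    rw [ih (W + w a), add_assoc]
    ring

lemma searchNum_lower {α : Type*} (w c : α → ℝ) (hw : ∀ i, 0 ≤ w i) (hc : ∀ i, 0 ≤ c i) (W : ℝ) (s : List α) :
    (s.map c).sum * (1 - W - (s.map w).sum) ≤ searchNum w c W s := by
  induction s generalizing W with
  | nil => simp [searchNum]
  | cons a t ih =>
    simp only [searchNum, List.map_cons, List.sum_cons]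
    have h1 := ih (W + w a)
    have h2 : 0 ≤ (t.map c).sum := List.sum_nonneg (by
      intro q hq; obtain ⟨i, _, rfl⟩ := List.mem_map.mp hq; exact hc i)
    have h3 : 0 ≤ (t.map w).sum := List.sum_nonneg (by
      intro q hq; obtain ⟨i, _, rfl⟩ := List.mem_map.mp hq; exact hw i)
    nlinarith [mul_nonneg (hc a) (add_nonneg (hw a) h3)]

lemma searchNum_upper {α : Type*} (w c : α → ℝ) (hw : ∀ i, 0 ≤ w i) (hc : ∀ i, 0 ≤ c i)
    (W : ℝ) (hW : 0 ≤ W) (s : List α) :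
    searchNum w c W s ≤ (s.map c).sum * (1 - W) := by
  induction s generalizing W with
  | nil => simp [searchNum]
  | cons a t ih =>
    simp only [searchNum, List.map_cons, List.sum_cons]
    have h1 := ih (W + w a) (by linarith [hw a])
    have h2 : 0 ≤ (t.map c).sum := List.sum_nonneg (by
      intro q hq; obtain ⟨i, _, rfl⟩ := List.mem_map.mp hq; exact hc i)
    nlinarith [mul_nonneg h2 (hw a)]

lemma ereal_coe_max (a b : ℝ) : ((max a b : ℝ) : EReal) = max (a : EReal) (b : EReal) :=
  Monotone.map_max (fun _ _ h => EReal.coe_le_coe_iff.mpr h)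

/-- Support property of the cost/reward ratio: if `xy` and `xyz` are searches
(sequences of distinct arms) and `ρ(z) ≥ ρ(y)`, then
`J⁺(xy) ≥ min {J⁺(x), J⁺(xyz)}`. -/
theorem stmt_5 (n : ℕ) (w c : Fin n → ℝ)
    (hw : ∀ i, 0 ≤ w i) (hc : ∀ i, 0 < c i)
    (x y z : List (Fin n)) (hnodup : (x ++ y ++ z).Nodup)
    (hρ : densityL w c y ≤ densityL w c z) :
    min (Jplus w c x) (Jplus w c (x ++ y ++ z)) ≤ Jplus w c (x ++ y) := by
  classical
  by_contra hcon
  rw [not_le, lt_min_iff] at hcon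
  obtain ⟨h1, h2⟩ := hcon
  have sumw_nonneg : ∀ l : List (Fin n), 0 ≤ (l.map w).sum := fun l =>
    List.sum_nonneg (by intro q hq; obtain ⟨i, _, rfl⟩ := List.mem_map.mp hq; exact hw i)
  have sumc_nonneg : ∀ l : List (Fin n), 0 ≤ (l.map c).sum := fun l =>
    List.sum_nonneg (by intro q hq; obtain ⟨i, _, rfl⟩ := List.mem_map.mp hq; exact (hc i).le)
  have hmw : ∀ a b : List (Fin n), ((a ++ b).map w).sum = (a.map w).sum + (b.map w).sum := by
    intro a b; rw [List.map_append, List.sum_append]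
  by_cases h0 : ((x ++ y).map w).sum = 0
  · rw [Jplus, Jval, if_pos h0, max_eq_right le_top] at h1
    exact not_top_lt h1
  have hWxy : 0 < ((x ++ y).map w).sum := lt_of_le_of_ne (sumw_nonneg _) (Ne.symm h0)
  set T : ℝ := max 0 (searchNum w c 0 (x ++ y) / ((x ++ y).map w).sum) with hT
  have hT0 : 0 ≤ T := le_max_left _ _
  have hJxy : Jplus w c (x ++ y) = ((T : ℝ) : EReal) := by
    rw [Jplus, Jval, if_neg h0, hT, ereal_coe_max, EReal.coe_zero]
  rw [hJxy] at h1 h2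
  have hA : searchNum w c 0 (x ++ y) ≤ T * ((x ++ y).map w).sum :=
    (div_le_iff₀ hWxy).mp (le_max_right _ _)
  have hs : ((x ++ y ++ z).map w).sum = ((x ++ y).map w).sum + (z.map w).sum := hmw _ _
  have hWxyz : 0 < ((x ++ y ++ z).map w).sum := by
    rw [hs]; linarith [sumw_nonneg z]
  have hB : T * ((x ++ y ++ z).map w).sum < searchNum w c 0 (x ++ y ++ z) := by
    have hne : ((x ++ y ++ z).map w).sum ≠ 0 := ne_of_gt hWxyz
    rw [Jplus, Jval, if_neg hne, ← EReal.coe_zero, ← ereal_coe_max] at h2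
    have h3 := EReal.coe_lt_coe_iff.mp h2
    have h4 : T < searchNum w c 0 (x ++ y ++ z) / ((x ++ y ++ z).map w).sum := by
      rcases lt_max_iff.mp h3 with h | h
      · linarith
      · exact h
    exact (lt_div_iff₀ hWxyz).mp h4
  have hx : T * (x.map w).sum < searchNum w c 0 x ∨ (x.map w).sum = 0 := by
    by_cases hx0 : (x.map w).sum = 0
    · right; exact hx0
    · left
      have hxpos : 0 < (x.map w).sum := lt_of_le_of_ne (sumw_nonneg x) (Ne.symm hx0)
      rw [Jplus, Jval, if_neg hx0, ← EReal.coe_zero, ← ereal_coe_max] at h1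
      have h3 := EReal.coe_lt_coe_iff.mp h1
      have h4 : T < searchNum w c 0 x / (x.map w).sum := by
        rcases lt_max_iff.mp h3 with h | h
        · linarith
        · exact h
      exact (lt_div_iff₀ hxpos).mp h4
  have hx' : T * (x.map w).sum ≤ searchNum w c 0 x := by
    rcases hx with h | h
    · linarith
    · rw [h, mul_zero]
      have hl := searchNum_lower w c hw (fun i => (hc i).le) 0 x
      rw [h] at hl
      nlinarith [sumc_nonneg x]
  have hNxy : searchNum w c 0 (x ++ y) =
      searchNum w c 0 x + (searchNum w c 0 y - (x.map w).sum * (y.map c).sum) := by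
    rw [searchNum_append, searchNum_shift w c (0 + (x.map w).sum) y]; ring
  have hNxyz : searchNum w c 0 (x ++ y ++ z) =
      searchNum w c 0 (x ++ y) + (searchNum w c 0 z - ((x ++ y).map w).sum * (z.map c).sum) := by
    rw [searchNum_append, searchNum_shift w c (0 + ((x ++ y).map w).sum) z]; ring
  have hz : T * (z.map w).sum <
      searchNum w c 0 z - ((x ++ y).map w).sum * (z.map c).sum := by
    rw [hs, hNxyz, mul_add] at hB
    linarith
  by_cases hzn : z = []
  · subst hzn; simp [searchNum] at hz
  by_cases hyn : y = []
  · subst hyn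
    rcases hx with h | h
    · simp only [List.append_nil] at hA hNxy
      simp [searchNum] at hNxy
      linarith
    · rw [List.append_nil] at hWxy
      rw [h] at hWxy; exact lt_irrefl 0 hWxy
  have hCy : 0 < (y.map c).sum := by
    apply List.sum_pos
    · intro q hq; obtain ⟨i, _, rfl⟩ := List.mem_map.mp hq; exact hc i
    · simpa using hyn
  have hCz : 0 < (z.map c).sum := by
    apply List.sum_pos
    · intro q hq; obtain ⟨i, _, rfl⟩ := List.mem_map.mp hq; exact hc i
    · simpa using hzn
  have hρ' : (y.map w).sum * (z.map c).sum ≤ (z.map w).sum * (y.map c).sum := by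
    rw [densityL, densityL, div_le_div_iff₀ hCy hCz] at hρ
    exact hρ
  have hy_low := searchNum_lower w c hw (fun i => (hc i).le) 0 y
  have hz_up := searchNum_upper w c hw (fun i => (hc i).le) 0 le_rfl z
  have hwxy : ((x ++ y).map w).sum = (x.map w).sum + (y.map w).sum := hmw _ _
  rw [hwxy] at hA hz
  have A2 : (y.map c).sum * (1 - (x.map w).sum - (y.map w).sum) ≤ T * (y.map w).sum := by
    rw [hNxy, mul_add] at hA
    nlinarith
  have B1 : T * (z.map w).sum <
      (z.map c).sum * (1 - (x.map w).sum - (y.map w).sum) := by nlinarith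
  nlinarith [mul_le_mul_of_nonneg_right A2 hCz.le, mul_lt_mul_of_pos_right B1 hCy,
    mul_le_mul_of_nonneg_left hρ' hT0]
end

section
/- Smith's rule exchange argument: for a permutation s of [n] and a single adjacent transposition swapping positions i and i+1, the change in weighted completion time d(s) = ∑_{i} w_{s_i} ∑_{j≤i} c_{s_j} equals c_{s_i} c_{s_{i+1}} (w_{s_{i+1}}/c_{s_{i+1}} − w_{s_i}/c_{s_i}); hence d is minimized over all permutations exactly when items are ordered by nonincreasing ratio w_i/c_i. -/
open Finset

/-- Weighted completion time of the ordering given by a permutation `s` of the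
positions: `d(s) = ∑_i w_{s_i} ∑_{j≤i} c_{s_j}`. -/
noncomputable def dPerm {n : ℕ} (w c : Fin n → ℝ) (s : Equiv.Perm (Fin n)) : ℝ :=
  ∑ i : Fin n, w (s i) * ∑ j ∈ Finset.Iic i, c (s j)

/-- Double-sum (pairwise) form of the weighted completion time. -/
noncomputable def smithD {n : ℕ} (w c : Fin n → ℝ) (s : Equiv.Perm (Fin n)) : ℝ :=
  ∑ a : Fin n, ∑ b : Fin n, if s.symm b ≤ s.symm a then w a * c b else 0

lemma dPerm_eq_smithD {n : ℕ} (w c : Fin n → ℝ) (s : Equiv.Perm (Fin n)) :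
    dPerm w c s = smithD w c s := by
  unfold dPerm smithD
  rw [← Equiv.sum_comp s (fun a => ∑ b : Fin n, if s.symm b ≤ s.symm a then w a * c b else 0)]
  refine Finset.sum_congr rfl fun i _ => ?_
  rw [← Equiv.sum_comp s (fun b => if s.symm b ≤ s.symm (s i) then w (s i) * c b else 0)]
  simp only [Equiv.symm_apply_apply, Finset.mul_sum]
  rw [← Finset.sum_filter]
  congr 1
  ext j
  simp

lemma smithD_reindex {n : ℕ} (w c : Fin n → ℝ) (s τ : Equiv.Perm (Fin n)) :
    smithD w c (s * τ) = ∑ p : Fin n, ∑ q : Fin n,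
      if τ.symm q ≤ τ.symm p then w (s p) * c (s q) else 0 := by
  unfold smithD
  have hsymm : ∀ b, (s * τ).symm b = τ.symm (s.symm b) := fun b => rfl
  rw [← Equiv.sum_comp s (fun a => ∑ b : Fin n,
    if (s * τ).symm b ≤ (s * τ).symm a then w a * c b else 0)]
  refine Finset.sum_congr rfl fun p _ => ?_
  rw [← Equiv.sum_comp s (fun b =>
    if (s * τ).symm b ≤ (s * τ).symm (s p) then w (s p) * c b else 0)]
  simp only [hsymm, Equiv.symm_apply_apply]

lemma smith_ite_cancel {P Q : Prop} [Decidable P] [Decidable Q] (h : P ↔ Q) (x : ℝ) :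
    (if P then x else 0) - (if Q then x else 0) = 0 := by
  rw [if_congr h rfl rfl, sub_self]

lemma smith_pointF {n : ℕ} (w c : Fin n → ℝ) (s : Equiv.Perm (Fin n)) (i j : Fin n)
    (hij : (i : ℕ) + 1 = (j : ℕ)) (p q : Fin n) :
    (if q ≤ p then w (s p) * c (s q) else 0)
      - (if Equiv.swap i j q ≤ Equiv.swap i j p then w (s p) * c (s q) else 0)
    = (if p = j ∧ q = i then w (s j) * c (s i) else 0)
      - (if p = i ∧ q = j then w (s i) * c (s j) else 0) := by
  have hne : i ≠ j := fun h => by rw [h] at hij; omega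
  by_cases hpi : p = i
  · by_cases hqi : q = i
    · rw [hpi, hqi, Equiv.swap_apply_left,
        if_pos (le_refl i), if_pos (le_refl j), sub_self]
      simp [hne]
    · by_cases hqj : q = j
      · rw [hpi, hqj, Equiv.swap_apply_left, Equiv.swap_apply_right,
          if_neg (show ¬((j:Fin n) ≤ i) by rw [Fin.le_def]; omega),
          if_pos (show i ≤ j by rw [Fin.le_def]; omega)]
        simp [hne]
      · have hqj' : (q : ℕ) ≠ (j : ℕ) := fun h => hqj (Fin.ext h)
        rw [if_neg (show ¬(p = j ∧ q = i) from fun h => hne (hpi ▸ h.1)),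
          if_neg (show ¬(p = i ∧ q = j) from fun h => hqj h.2), sub_self,
          hpi, Equiv.swap_apply_of_ne_of_ne hqi hqj, Equiv.swap_apply_left]
        exact smith_ite_cancel (by rw [Fin.le_def, Fin.le_def]; omega) _
  · by_cases hpj : p = j
    · by_cases hqi : q = i
      · rw [hpj, hqi, Equiv.swap_apply_left, Equiv.swap_apply_right,
          if_pos (show i ≤ j by rw [Fin.le_def]; omega),
          if_neg (show ¬((j:Fin n) ≤ i) by rw [Fin.le_def]; omega)]
        simp [hne, Ne.symm hne]
      · by_cases hqj : q = j
        · rw [hpj, hqj, Equiv.swap_apply_right,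
            if_pos (le_refl j), if_pos (le_refl i), sub_self]
          simp [hne, Ne.symm hne]
        · have hqj' : (q : ℕ) ≠ (j : ℕ) := fun h => hqj (Fin.ext h)
          rw [if_neg (show ¬(p = j ∧ q = i) from fun h => hqi h.2),
            if_neg (show ¬(p = i ∧ q = j) from fun h => hpi h.1), sub_self,
            hpj, Equiv.swap_apply_of_ne_of_ne hqi hqj, Equiv.swap_apply_right]
          exact smith_ite_cancel (by rw [Fin.le_def, Fin.le_def]; omega) _
    · have hpi' : (p : ℕ) ≠ (i : ℕ) := fun h => hpi (Fin.ext h)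
      have hpj' : (p : ℕ) ≠ (j : ℕ) := fun h => hpj (Fin.ext h)
      rw [if_neg (show ¬(p = j ∧ q = i) from fun h => hpj h.1),
        if_neg (show ¬(p = i ∧ q = j) from fun h => hpi h.1), sub_self,
        Equiv.swap_apply_of_ne_of_ne hpi hpj]
      by_cases hqi : q = i
      · rw [hqi, Equiv.swap_apply_left]
        exact smith_ite_cancel (by rw [Fin.le_def, Fin.le_def]; omega) _
      · by_cases hqj : q = j
        · rw [hqj, Equiv.swap_apply_right]
          exact smith_ite_cancel (by rw [Fin.le_def, Fin.le_def]; omega) _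
        · rw [Equiv.swap_apply_of_ne_of_ne hqi hqj]
          exact smith_ite_cancel Iff.rfl _

lemma smith_exchange {n : ℕ} (w c : Fin n → ℝ) (hc : ∀ k, 0 < c k)
    (s : Equiv.Perm (Fin n)) (i j : Fin n) (hij : (i : ℕ) + 1 = (j : ℕ)) :
    dPerm w c s - dPerm w c (s * Equiv.swap i j)
      = c (s i) * c (s j) * (w (s j) / c (s j) - w (s i) / c (s i)) := by
  have h1 : dPerm w c s = smithD w c (s * 1) := by rw [mul_one, dPerm_eq_smithD]
  rw [h1, dPerm_eq_smithD, smithD_reindex, smithD_reindex, ← Finset.sum_sub_distrib]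
  have : ∀ p : Fin n, (∑ q : Fin n, if (1 : Equiv.Perm (Fin n)).symm q ≤
        (1 : Equiv.Perm (Fin n)).symm p then w (s p) * c (s q) else 0)
      - (∑ q : Fin n, if (Equiv.swap i j).symm q ≤ (Equiv.swap i j).symm p
          then w (s p) * c (s q) else 0)
      = ∑ q : Fin n, ((if p = j ∧ q = i then w (s j) * c (s i) else 0)
          - (if p = i ∧ q = j then w (s i) * c (s j) else 0)) := by
    intro p
    rw [← Finset.sum_sub_distrib]
    refine Finset.sum_congr rfl fun q _ => ?_
    simp only [Equiv.Perm.one_symm, Equiv.Perm.coe_one, id_eq, Equiv.symm_swap]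
    exact smith_pointF w c s i j hij p q
  rw [Finset.sum_congr rfl fun p _ => this p]
  simp only [Finset.sum_sub_distrib, ite_and, Finset.sum_ite_eq, Finset.sum_ite_eq',
    Finset.mem_univ, if_true]
  simp [Finset.sum_ite_irrel]
  have hi := (hc (s i)).ne'
  have hj := (hc (s j)).ne'
  field_simp

lemma smith_min {n : ℕ} (w c : Fin n → ℝ) (hw : ∀ i, 0 ≤ w i) (hc : ∀ i, 0 < c i)
    (s : Equiv.Perm (Fin n))
    (hrat : ∀ i j : Fin n, i ≤ j → w (s j) / c (s j) ≤ w (s i) / c (s i))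
    (σ : Equiv.Perm (Fin n)) : dPerm w c s ≤ dPerm w c σ := by
  rw [dPerm_eq_smithD, dPerm_eq_smithD]
  set F : Equiv.Perm (Fin n) → Fin n → Fin n → ℝ :=
    fun τ a b => if τ.symm b ≤ τ.symm a then w a * c b else 0 with hF
  have key : ∀ a b : Fin n, F s a b + F s b a ≤ F σ a b + F σ b a := by
    intro a b
    by_cases hab : a = b
    · subst hab; simp [hF]
    · have h1 : s.symm a ≠ s.symm b := fun h => hab (s.symm.injective h)
      have hrhs1 : (0:ℝ) ≤ F σ a b := by
        simp only [hF]; split_ifs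
        · exact mul_nonneg (hw a) (hc b).le
        · exact le_refl 0
      have hrhs2 : (0:ℝ) ≤ F σ b a := by
        simp only [hF]; split_ifs
        · exact mul_nonneg (hw b) (hc a).le
        · exact le_refl 0
      rcases lt_or_gt_of_ne h1 with hs | hs
      · have hlhs : F s a b + F s b a = w b * c a := by
          simp only [hF]
          rw [if_neg (not_le.mpr hs), if_pos hs.le, zero_add]
        have hratio : w b * c a ≤ w a * c b := by
          have h := hrat (s.symm a) (s.symm b) hs.le
          rw [Equiv.apply_symm_apply, Equiv.apply_symm_apply,
            div_le_div_iff₀ (hc b) (hc a)] at h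
          linarith
        rcases le_or_gt (σ.symm b) (σ.symm a) with h | h
        · have : F σ a b = w a * c b := by simp only [hF]; rw [if_pos h]
          linarith
        · have : F σ b a = w b * c a := by simp only [hF]; rw [if_pos h.le]
          linarith
      · have hlhs : F s a b + F s b a = w a * c b := by
          simp only [hF]
          rw [if_pos hs.le, if_neg (not_le.mpr hs), add_zero]
        have hratio : w a * c b ≤ w b * c a := by
          have h := hrat (s.symm b) (s.symm a) hs.le
          rw [Equiv.apply_symm_apply, Equiv.apply_symm_apply,
            div_le_div_iff₀ (hc a) (hc b)] at h
          linarith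
        rcases le_or_gt (σ.symm b) (σ.symm a) with h | h
        · have : F σ a b = w a * c b := by simp only [hF]; rw [if_pos h]
          linarith
        · have : F σ b a = w b * c a := by simp only [hF]; rw [if_pos h.le]
          linarith
  have h2 : ∀ τ : Equiv.Perm (Fin n),
      smithD w c τ + smithD w c τ = ∑ a : Fin n, ∑ b : Fin n, (F τ a b + F τ b a) := by
    intro τ
    have hid : smithD w c τ = ∑ a : Fin n, ∑ b : Fin n, F τ a b := rfl
    rw [hid]
    nth_rewrite 2 [Finset.sum_comm]
    rw [← Finset.sum_add_distrib]
    exact Finset.sum_congr rfl fun a _ => (Finset.sum_add_distrib).symm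
  have hle : ∑ a : Fin n, ∑ b : Fin n, (F s a b + F s b a)
      ≤ ∑ a : Fin n, ∑ b : Fin n, (F σ a b + F σ b a) :=
    Finset.sum_le_sum fun a _ => Finset.sum_le_sum fun b _ => key a b
  have := h2 s; have := h2 σ
  linarith

/-- Smith's rule exchange argument: swapping two adjacent positions `i, i+1`
changes `d` by `c_{s_i} c_{s_{i+1}} (ρ(s_{i+1}) − ρ(s_i))` with `ρ(k) = w_k/c_k`;
hence `d` is minimized over all permutations exactly when the items are ordered
by nonincreasing ratio `w/c`. -/
theorem stmt_10 (n : ℕ) (w c : Fin n → ℝ)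
    (hw : ∀ i, 0 ≤ w i) (hc : ∀ i, 0 < c i)
    (s : Equiv.Perm (Fin n)) :
    (∀ i j : Fin n, (i : ℕ) + 1 = (j : ℕ) →
      dPerm w c s - dPerm w c (s * Equiv.swap i j)
        = c (s i) * c (s j) * (w (s j) / c (s j) - w (s i) / c (s i))) ∧
    ((∀ σ : Equiv.Perm (Fin n), dPerm w c s ≤ dPerm w c σ) ↔
      (∀ i j : Fin n, i ≤ j → w (s j) / c (s j) ≤ w (s i) / c (s i))) := by
  refine ⟨fun i j hij => smith_exchange w c hc s i j hij, ?_, fun hrat σ => smith_min w c hw hc s hrat σ⟩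
  intro hmin
  have hadj : ∀ i j : Fin n, (i : ℕ) + 1 = (j : ℕ) →
      w (s j) / c (s j) ≤ w (s i) / c (s i) := by
    intro i j hij
    have h := smith_exchange w c hc s i j hij
    have hle := hmin (s * Equiv.swap i j)
    have hprod : 0 < c (s i) * c (s j) := mul_pos (hc (s i)) (hc (s j))
    nlinarith
  have aux : ∀ k : ℕ, ∀ i j : Fin n, (j : ℕ) = (i : ℕ) + k →
      w (s j) / c (s j) ≤ w (s i) / c (s i) := by
    intro k
    induction k with
    | zero =>
      intro i j h
      have : j = i := Fin.ext (by omega)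
      rw [this]
    | succ k ih =>
      intro i j h
      have hm : (i : ℕ) + k < n := by have := j.isLt; omega
      exact le_trans (hadj ⟨(i : ℕ) + k, hm⟩ j (by show (i : ℕ) + k + 1 = j; omega))
        (ih i ⟨(i : ℕ) + k, hm⟩ rfl)
  intro i j hij
  exact aux ((j : ℕ) - (i : ℕ)) i j (by have := Fin.le_def.mp hij; omega)
end

section
/- Bound on the expected stopping time: if at each round the cost incurred is a random variable in [0,1] with conditional expectation at least c_min > 0 given the past, and τ_B is the first round at which the cumulative cost exceeds budget B, then E[τ_B] ≤ T_B + 1 + (2/c_min²)·exp(−c_min·B), where T_B = ⌈2B/c_min⌉. -/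
open MeasureTheory Real
open scoped ENNReal

section aux
variable {Ω : Type*} [m0 : MeasurableSpace Ω]

/-- Hoeffding's lemma, Bernoulli case. -/
lemma bern_mgf_le (p l : ℝ) (hp0 : 0 ≤ p) (hp1 : p ≤ 1) (hl : 0 ≤ l) :
    1 - p + p * Real.exp (-l) ≤ Real.exp (l ^ 2 / 8 - l * p) := by
  set D : ℝ → ℝ := fun x => 1 - p + p * Real.exp (-x) with hD
  have hDpos : ∀ x, 0 < D x := by
    intro x
    rcases eq_or_lt_of_le hp1 with h | h
    · simp only [hD, h]
      simpa using Real.exp_pos (-x)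
    · have h1 : 0 < 1 - p := by linarith
      have h2 : 0 ≤ p * Real.exp (-x) := mul_nonneg hp0 (Real.exp_pos _).le
      simp only [hD]; linarith
  have hexpderiv : ∀ x : ℝ, HasDerivAt (fun x : ℝ => Real.exp (-x)) (-Real.exp (-x)) x := by
    intro x
    simpa using (hasDerivAt_neg x).exp
  have hDderiv : ∀ x, HasDerivAt D (-(p * Real.exp (-x))) x := by
    intro x
    simpa [mul_comm, hD] using (((hexpderiv x).const_mul p).const_add (1 - p))
  set φ : ℝ → ℝ := fun x => x / 4 - p + p * Real.exp (-x) / D x with hφ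
  have hφderiv : ∀ x, HasDerivAt φ
      (1 / 4 + ((p * Real.exp (-x)) ^ 2 - (p * Real.exp (-x)) * D x) / (D x) ^ 2) x := by
    intro x
    have hnum : HasDerivAt (fun x : ℝ => p * Real.exp (-x)) (-(p * Real.exp (-x))) x := by
      simpa [mul_comm] using (hexpderiv x).const_mul p
    have hquot := hnum.div (hDderiv x) (hDpos x).ne'
    have hlin : HasDerivAt (fun x : ℝ => x / 4 - p) (1 / 4) x := by
      simpa using ((hasDerivAt_id x).div_const 4).sub_const p
    have h := hlin.add hquot
    refine h.congr_deriv ?_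
    have hDx := (hDpos x).ne'
    field_simp
    ring
  have hφ'nonneg : ∀ x, 0 ≤ 1 / 4 +
      ((p * Real.exp (-x)) ^ 2 - (p * Real.exp (-x)) * D x) / (D x) ^ 2 := by
    intro x
    set u := p * Real.exp (-x) with hu
    have hu0 : 0 ≤ u := mul_nonneg hp0 (Real.exp_pos _).le
    have huD : u ≤ D x := by
      simp only [hD, hu]; linarith
    set q := u / D x with hq
    have hq0 : 0 ≤ q := div_nonneg hu0 (hDpos x).le
    have hq1 : q ≤ 1 := (div_le_one (hDpos x)).mpr huD
    have hquad : (u ^ 2 - u * D x) / (D x) ^ 2 = q ^ 2 - q := by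
      have := (hDpos x).ne'
      rw [hq]
      field_simp
    rw [hquad]
    nlinarith [sq_nonneg (q - 1 / 2)]
  have hφmono : Monotone φ := by
    refine monotone_of_deriv_nonneg (fun x => (hφderiv x).differentiableAt) (fun x => ?_)
    rw [(hφderiv x).deriv]
    exact hφ'nonneg x
  have hφ0 : φ 0 = 0 := by
    simp [hφ, hD]
  set g : ℝ → ℝ := fun x => x ^ 2 / 8 - x * p - Real.log (D x) with hg
  have hgderiv : ∀ x, HasDerivAt g (φ x) x := by
    intro x
    have h1 : HasDerivAt (fun x : ℝ => x ^ 2 / 8 - x * p) (x / 4 - p) x := by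
      have := ((hasDerivAt_pow 2 x).div_const 8).sub ((hasDerivAt_id x).mul_const p)
      refine this.congr_deriv ?_
      simp; ring
    have h2 : HasDerivAt (fun x => Real.log (D x)) (-(p * Real.exp (-x)) / D x) x :=
      (hDderiv x).log (hDpos x).ne'
    have h := h1.sub h2
    refine h.congr_deriv ?_
    simp only [hφ]
    ring
  have hgmono : MonotoneOn g (Set.Ici 0) := by
    refine monotoneOn_of_deriv_nonneg (convex_Ici 0)
      (fun x _ => ((hgderiv x).differentiableAt).continuousAt.continuousWithinAt)
      (fun x _ => ((hgderiv x).differentiableAt).differentiableWithinAt) (fun x hx => ?_)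
    rw [(hgderiv x).deriv]
    rw [interior_Ici] at hx
    calc (0 : ℝ) = φ 0 := hφ0.symm
    _ ≤ φ x := hφmono (le_of_lt hx)
  have hg0 : g 0 = 0 := by
    simp [hg, hD]
  have hgl : 0 ≤ g l := by
    rw [← hg0]
    exact hgmono (Set.mem_Ici.mpr le_rfl) (Set.mem_Ici.mpr hl) hl
  have hlog : Real.log (D l) ≤ l ^ 2 / 8 - l * p := by
    simp only [hg] at hgl
    linarith
  exact (Real.log_le_iff_le_exp (hDpos l)).mp hlog

lemma integrable_of_bdd {μ : Measure Ω} [IsProbabilityMeasure μ] {f : Ω → ℝ}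
    (hf : AEStronglyMeasurable f μ) {C : ℝ}
    (h : ∀ ω, ‖f ω‖ ≤ C) : Integrable f μ :=
  (integrable_const C).mono' hf (Filter.Eventually.of_forall h)

lemma mgf_bound (μ : Measure Ω) [IsProbabilityMeasure μ]
    (ℱ : Filtration ℕ m0) (X : ℕ → Ω → ℝ)
    (hmeas : ∀ t, StronglyMeasurable[ℱ (t + 1)] (X t))
    (hbound : ∀ t ω, X t ω ∈ Set.Icc (0 : ℝ) 1)
    (cmin : ℝ) (hcmin : 0 < cmin) (hcmin1 : cmin ≤ 1)
    (hcond : ∀ t, ∀ᵐ ω ∂μ, cmin ≤ (μ[X t | ℱ t]) ω)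
    (l : ℝ) (hl : 0 ≤ l) (t : ℕ) :
    ∫ ω, Real.exp (-l * ∑ u ∈ Finset.range t, X u ω) ∂μ
      ≤ Real.exp (t * (l ^ 2 / 8 - l * cmin)) := by
  set S : ℕ → Ω → ℝ := fun t ω => ∑ u ∈ Finset.range t, X u ω with hS
  have hS_nonneg : ∀ t ω, 0 ≤ S t ω := fun t ω =>
    Finset.sum_nonneg fun u _ => (hbound u ω).1
  have hS_meas : ∀ t, StronglyMeasurable[ℱ t] (S t) := by
    intro t
    apply Finset.stronglyMeasurable_fun_sum
    intro u hu
    exact (hmeas u).mono (ℱ.mono (Finset.mem_range.mp hu))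
  induction t with
  | zero => simp [hS]
  | succ t ih =>
    set K : ℝ := Real.exp (l ^ 2 / 8 - l * cmin) with hK
    have hK0 : 0 < K := Real.exp_pos _
    set f : Ω → ℝ := fun ω => Real.exp (-l * S t ω) with hf
    set g : Ω → ℝ := fun ω => Real.exp (-l * X t ω) with hg
    have hf_meas : StronglyMeasurable[ℱ t] f :=
      Real.continuous_exp.comp_stronglyMeasurable ((hS_meas t).const_mul (-l))
    have hf_meas0 : AEStronglyMeasurable f μ :=
      ((hf_meas.mono (ℱ.le t)) : StronglyMeasurable f).aestronglyMeasurable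
    have hg_meas0 : AEStronglyMeasurable g μ :=
      (Real.continuous_exp.comp_stronglyMeasurable
        (((hmeas t).mono (ℱ.le (t + 1))).const_mul (-l))).aestronglyMeasurable
    have hf_pos : ∀ ω, 0 < f ω := fun ω => Real.exp_pos _
    have hf_le1 : ∀ ω, f ω ≤ 1 := by
      intro ω
      rw [hf]
      simp only
      rw [← Real.exp_zero]
      apply Real.exp_le_exp.mpr
      have := hS_nonneg t ω
      nlinarith
    have hg_le1 : ∀ ω, g ω ≤ 1 := by
      intro ω
      rw [hg]
      simp only
      rw [← Real.exp_zero]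
      apply Real.exp_le_exp.mpr
      have := (hbound t ω).1
      nlinarith
    have hf_int : Integrable f μ := integrable_of_bdd hf_meas0
      (C := 1) fun ω => by rw [Real.norm_eq_abs, abs_of_pos (hf_pos ω)]; exact hf_le1 ω
    have hg_int : Integrable g μ := integrable_of_bdd hg_meas0
      (C := 1) fun ω => by
        rw [Real.norm_eq_abs, abs_of_pos (Real.exp_pos _)]; exact hg_le1 ω
    have hfg_int : Integrable (f * g) μ := integrable_of_bdd (hf_meas0.mul hg_meas0)
      (C := 1) fun ω => by
        rw [Pi.mul_apply, Real.norm_eq_abs,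
          abs_of_pos (mul_pos (hf_pos ω) (Real.exp_pos _))]
        calc f ω * g ω ≤ 1 * 1 :=
          mul_le_mul (hf_le1 ω) (hg_le1 ω) (Real.exp_pos _).le zero_le_one
        _ = 1 := by ring
    -- conditional bound on g
    set a : ℝ := 1 - Real.exp (-l) with ha
    have ha0 : 0 ≤ a := by
      have : Real.exp (-l) ≤ 1 := Real.exp_le_one_iff.mpr (by linarith)
      linarith
    set h : Ω → ℝ := fun ω => 1 - a * X t ω with hh
    have hh_int : Integrable h μ := by
      apply integrable_of_bdd (C := 1 + a)
      · exact (aestronglyMeasurable_const.sub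
          ((((hmeas t).mono (ℱ.le (t + 1))).const_mul a).aestronglyMeasurable))
      · intro ω
        simp only [hh]
        rw [Real.norm_eq_abs, abs_le]
        have h1 := (hbound t ω).1
        have h2 := (hbound t ω).2
        constructor <;> nlinarith
    have hgh : ∀ ω, g ω ≤ h ω := by
      intro ω
      have h1 := (hbound t ω).1
      have h2 := (hbound t ω).2
      have hcvx := convexOn_exp.2 (Set.mem_univ (0 : ℝ)) (Set.mem_univ (-l))
        (by linarith : (0:ℝ) ≤ 1 - X t ω) h1 (by ring)
      simp only [smul_eq_mul, mul_zero, zero_add, Real.exp_zero, mul_one] at hcvx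
      calc g ω = Real.exp (X t ω * -l) := by rw [hg]; ring_nf
      _ ≤ (1 - X t ω) + X t ω * Real.exp (-l) := hcvx
      _ = h ω := by rw [hh]; simp only [ha]; ring
    have hcondg : (μ[g | ℱ t]) ≤ᵐ[μ] fun _ => K := by
      have step1 : (μ[g | ℱ t]) ≤ᵐ[μ] (μ[h | ℱ t]) :=
        condExp_mono hg_int hh_int (Filter.Eventually.of_forall hgh)
      have hXint : Integrable (X t) μ := integrable_of_bdd
        (((hmeas t).mono (ℱ.le (t + 1))).aestronglyMeasurable) (C := 1) fun ω => by
          rw [Real.norm_eq_abs, abs_le]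
          exact ⟨by linarith [(hbound t ω).1], (hbound t ω).2⟩
      have step2 : (μ[h | ℱ t]) =ᵐ[μ] fun ω => 1 - a * (μ[X t | ℱ t]) ω := by
        have heq : h = (fun _ => (1:ℝ)) - a • X t := by
          funext ω; simp [hh, smul_eq_mul]
        rw [heq]
        refine (condExp_sub (integrable_const 1) (hXint.smul a) (ℱ t)).trans ?_
        rw [condExp_const (ℱ.le t)]
        filter_upwards [condExp_smul (μ := μ) (m := ℱ t) a (X t)] with ω h1
        simp only [Pi.sub_apply, h1, Pi.smul_apply, smul_eq_mul]
      have step3 : (fun ω => 1 - a * (μ[X t | ℱ t]) ω) ≤ᵐ[μ] fun _ => K := by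
        filter_upwards [hcond t] with ω hω
        have hb : 1 - a * (μ[X t | ℱ t]) ω ≤ 1 - a * cmin := by nlinarith
        refine hb.trans ?_
        have := bern_mgf_le cmin l hcmin.le hcmin1 hl
        calc 1 - a * cmin = 1 - cmin + cmin * Real.exp (-l) := by rw [ha]; ring
        _ ≤ K := by rw [hK]; exact bern_mgf_le cmin l hcmin.le hcmin1 hl
      exact step1.trans (step2.le.trans step3)
    -- assemble
    have hsum : ∀ ω, Real.exp (-l * S (t + 1) ω) = f ω * g ω := by
      intro ω
      rw [hf, hg]
      simp only [hS, Finset.sum_range_succ]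
      rw [← Real.exp_add]
      ring_nf
    calc ∫ ω, Real.exp (-l * S (t + 1) ω) ∂μ = ∫ ω, (f * g) ω ∂μ := by
          simp only [Pi.mul_apply, hsum]
    _ = ∫ ω, (μ[f * g | ℱ t]) ω ∂μ := (integral_condExp (ℱ.le t)).symm
    _ = ∫ ω, f ω * (μ[g | ℱ t]) ω ∂μ := by
          apply integral_congr_ae
          filter_upwards [condExp_mul_of_stronglyMeasurable_left hf_meas hfg_int hg_int] with ω hω
          simpa using hω
    _ ≤ ∫ ω, f ω * K ∂μ := by
          apply integral_mono_ae
          · exact (integrable_condExp).bdd_mul hf_meas0 (c := 1) (Filter.Eventually.of_forall fun ω => by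
              rw [Real.norm_eq_abs, abs_of_pos (hf_pos ω)]; exact hf_le1 ω)
          · exact hf_int.mul_const K
          · filter_upwards [hcondg] with ω hω
            exact mul_le_mul_of_nonneg_left hω (hf_pos ω).le
    _ = (∫ ω, f ω ∂μ) * K := integral_mul_const K f
    _ ≤ Real.exp (t * (l ^ 2 / 8 - l * cmin)) * K :=
          mul_le_mul_of_nonneg_right ih hK0.le
    _ = Real.exp ((t + 1 : ℕ) * (l ^ 2 / 8 - l * cmin)) := by
          rw [hK, ← Real.exp_add]
          push_cast
          ring_nf
end aux

/-- Bound on the expected stopping time: if at each round the cost is in `[0,1]`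
with conditional expectation at least `c_min > 0` given the past, and `τ_B` is
the first round at which the cumulative cost exceeds the budget `B`, then
`E[τ_B] ≤ T_B + 1 + (2/c_min²) exp(−c_min B)` with `T_B = ⌈2B/c_min⌉`. -/
theorem stmt_12 {Ω : Type*} [m0 : MeasurableSpace Ω]
    (μ : Measure Ω) [IsProbabilityMeasure μ]
    (ℱ : Filtration ℕ m0) (X : ℕ → Ω → ℝ)
    (hmeas : ∀ t, StronglyMeasurable[ℱ (t + 1)] (X t))
    (hbound : ∀ t ω, X t ω ∈ Set.Icc (0 : ℝ) 1)
    (cmin : ℝ) (hcmin : 0 < cmin) (hcmin1 : cmin ≤ 1)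
    (hcond : ∀ t, ∀ᵐ ω ∂μ, cmin ≤ (μ[X t | ℱ t]) ω)
    (B : ℝ) (hB : 0 < B)
    (τ : Ω → ℕ)
    (hτ : ∀ ω, τ ω = sInf {t : ℕ | B < ∑ u ∈ Finset.range t, X u ω}) :
    ∫⁻ ω, (τ ω : ℝ≥0∞) ∂μ
      ≤ ENNReal.ofReal
          ((⌈2 * B / cmin⌉₊ : ℝ) + 1 + 2 / cmin ^ 2 * Real.exp (-cmin * B)) := by
  set T : ℕ := ⌈2 * B / cmin⌉₊ with hT
  set S : ℕ → Ω → ℝ := fun t ω => ∑ u ∈ Finset.range t, X u ω with hS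
  have hS_meas : ∀ t, StronglyMeasurable (S t) := by
    intro t
    apply Finset.stronglyMeasurable_fun_sum
    intro u _
    exact (hmeas u).mono (ℱ.le (u + 1))
  -- the sets {τ > t}
  set A : ℕ → Set Ω := fun t => {ω | t < τ ω} with hA
  have hA_eq : ∀ t, A t =
      (⋂ s ∈ Finset.range (t + 1), {ω | S s ω ≤ B}) ∩ (⋃ s : ℕ, {ω | B < S s ω}) := by
    intro t
    ext ω
    simp only [hA, Set.mem_setOf_eq, Set.mem_inter_iff, Set.mem_iInter, Set.mem_iUnion,
      Finset.mem_range, Nat.lt_succ_iff]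
    constructor
    · intro ht
      have hne : {u : ℕ | B < S u ω}.Nonempty := by
        by_contra hemp
        rw [Set.not_nonempty_iff_eq_empty] at hemp
        rw [hτ ω] at ht
        simp only [hS] at hemp
        rw [hemp, Nat.sInf_empty] at ht
        exact Nat.not_lt_zero t ht
      refine ⟨fun s hs => ?_, hne.imp fun u hu => hu⟩
      by_contra hcon
      push_neg at hcon
      have : τ ω ≤ s := by
        rw [hτ ω]
        exact Nat.sInf_le hcon
      omega
    · rintro ⟨hall, u, hu⟩
      have hne : {u : ℕ | B < S u ω}.Nonempty := ⟨u, hu⟩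
      have hmem : B < S (τ ω) ω := by
        rw [hτ ω]
        exact Nat.sInf_mem hne
      by_contra hcon
      push_neg at hcon
      exact absurd hmem (not_lt.mpr (hall _ hcon))
  have hSB_meas : ∀ s : ℕ, MeasurableSet {ω | S s ω ≤ B} :=
    fun s => measurableSet_le (hS_meas s).measurable measurable_const
  have hA_meas : ∀ t, MeasurableSet (A t) := by
    intro t
    rw [hA_eq t]
    exact (MeasurableSet.biInter (Finset.range (t + 1)).countable_toSet
      fun s _ => hSB_meas s).inter
      (MeasurableSet.iUnion fun s => measurableSet_lt measurable_const (hS_meas s).measurable)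
  have hA_subset : ∀ t, A t ⊆ {ω | S t ω ≤ B} := by
    intro t ω hω
    rw [hA_eq t] at hω
    exact Set.mem_iInter₂.mp hω.1 t (Finset.self_mem_range_succ t)
  have hS_nonneg : ∀ t ω, 0 ≤ S t ω := fun t ω =>
    Finset.sum_nonneg fun u _ => (hbound u ω).1
  -- layer cake
  have hlint : ∫⁻ ω, (τ ω : ℝ≥0∞) ∂μ = ∑' t : ℕ, μ (A t) := by
    have h1 : ∀ ω, (τ ω : ℝ≥0∞) = ∑' t : ℕ, (A t).indicator (fun _ => (1 : ℝ≥0∞)) ω := by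
      intro ω
      rw [tsum_eq_sum (s := Finset.range (τ ω))
        (fun t ht => Set.indicator_of_notMem (by
          simp only [hA, Set.mem_setOf_eq]
          rw [Finset.mem_range] at ht
          omega) _)]
      rw [Finset.sum_congr rfl (fun t ht => Set.indicator_of_mem (by
        simp only [hA, Set.mem_setOf_eq]
        rw [Finset.mem_range] at ht
        exact ht) _)]
      simp
    calc ∫⁻ ω, (τ ω : ℝ≥0∞) ∂μ
        = ∫⁻ ω, ∑' t : ℕ, (A t).indicator (fun _ => (1 : ℝ≥0∞)) ω ∂μ :=
          lintegral_congr h1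
    _ = ∑' t : ℕ, ∫⁻ ω, (A t).indicator (fun _ => (1 : ℝ≥0∞)) ω ∂μ :=
          lintegral_tsum fun t =>
            ((measurable_const.indicator (hA_meas t)).aemeasurable)
    _ = ∑' t : ℕ, μ (A t) := by
          refine tsum_congr fun t => ?_
          exact lintegral_indicator_one (hA_meas t)
  -- Markov bound for large t
  have htR : 2 * B / cmin ≤ (T : ℝ) := Nat.le_ceil _
  have hMarkov : ∀ t : ℕ, T + 1 ≤ t →
      μ {ω | S t ω ≤ B} ≤ ENNReal.ofReal (Real.exp (-(cmin ^ 2 * t) / 2)) := by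
    intro t ht
    have ht0 : (0 : ℝ) < t := by
      have : 1 ≤ t := le_trans (Nat.le_add_left 1 T) ht
      exact_mod_cast Nat.lt_of_lt_of_le Nat.zero_lt_one this
    have hct : 2 * B ≤ cmin * t := by
      have h1 : (T : ℝ) ≤ (t : ℝ) := by exact_mod_cast le_trans (Nat.le_succ T) ht
      have h2 : 2 * B / cmin ≤ (t : ℝ) := htR.trans h1
      rw [div_le_iff₀ hcmin] at h2
      nlinarith
    set l : ℝ := 4 * (cmin * t - B) / t with hldef
    have hl0 : 0 ≤ l := by
      apply div_nonneg _ ht0.le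
      nlinarith
    have hmgf := mgf_bound μ ℱ X hmeas hbound cmin hcmin hcmin1 hcond l hl0 t
    set f : Ω → ℝ := fun ω => Real.exp (-l * S t ω) with hfdef
    have hf_meas : Measurable f :=
      Real.measurable_exp.comp ((hS_meas t).measurable.const_mul (-l))
    have hf_int : Integrable f μ := by
      apply integrable_of_bdd (C := 1) hf_meas.aestronglyMeasurable
      intro ω
      rw [Real.norm_eq_abs, abs_of_pos (Real.exp_pos _)]
      show Real.exp (-l * S t ω) ≤ 1
      rw [← Real.exp_zero]
      apply Real.exp_le_exp.mpr
      have := hS_nonneg t ω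
      nlinarith
    have hsub : {ω | S t ω ≤ B} ⊆
        {ω | ENNReal.ofReal (Real.exp (-l * B)) ≤ ENNReal.ofReal (f ω)} := by
      intro ω hω
      simp only [Set.mem_setOf_eq] at hω ⊢
      apply ENNReal.ofReal_le_ofReal
      apply Real.exp_le_exp.mpr
      nlinarith
    have hmkv : ENNReal.ofReal (Real.exp (-l * B)) * μ {ω | S t ω ≤ B}
        ≤ ∫⁻ ω, ENNReal.ofReal (f ω) ∂μ := by
      refine le_trans (mul_le_mul_right (measure_mono hsub) _) ?_
      exact mul_meas_ge_le_lintegral₀ (hf_meas.ennreal_ofReal).aemeasurable _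
    have hintr : ∫⁻ ω, ENNReal.ofReal (f ω) ∂μ
        ≤ ENNReal.ofReal (Real.exp (t * (l ^ 2 / 8 - l * cmin))) := by
      rw [← ofReal_integral_eq_lintegral_ofReal hf_int
        (Filter.Eventually.of_forall fun ω => (Real.exp_pos _).le)]
      exact ENNReal.ofReal_le_ofReal hmgf
    have hexp0 : (0 : ℝ) < Real.exp (-l * B) := Real.exp_pos _
    have hdiv : μ {ω | S t ω ≤ B} ≤
        ENNReal.ofReal (Real.exp (t * (l ^ 2 / 8 - l * cmin))) /
          ENNReal.ofReal (Real.exp (-l * B)) := by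
      rw [ENNReal.le_div_iff_mul_le
        (Or.inl ((ENNReal.ofReal_pos.mpr hexp0).ne')) (Or.inl ENNReal.ofReal_ne_top)]
      rw [mul_comm]
      exact hmkv.trans hintr
    refine hdiv.trans ?_
    rw [← ENNReal.ofReal_div_of_pos hexp0, ← Real.exp_sub]
    apply ENNReal.ofReal_le_ofReal
    apply Real.exp_le_exp.mpr
    have hkey : (t : ℝ) * (l ^ 2 / 8 - l * cmin) - (-l * B)
        = -2 * (cmin * t - B) ^ 2 / t := by
      rw [hldef]
      field_simp
      ring
    rw [hkey]
    have h4 : cmin ^ 2 * (t : ℝ) ^ 2 ≤ 4 * (cmin * t - B) ^ 2 := by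
      nlinarith [mul_nonneg (by linarith : (0:ℝ) ≤ cmin * t - 2 * B)
        (by nlinarith : (0:ℝ) ≤ 3 * (cmin * t) - 2 * B)]
    rw [div_le_div_iff₀ ht0 two_pos]
    nlinarith
  -- geometric tail
  set r : ℝ := Real.exp (-(cmin ^ 2) / 2) with hrdef
  have hr0 : 0 < r := Real.exp_pos _
  have hr1 : r < 1 := by
    rw [hrdef, ← Real.exp_zero]
    apply Real.exp_lt_exp.mpr
    nlinarith [pow_pos hcmin 2]
  have h1r : 0 < 1 - r := by linarith
  -- real tail estimate
  have hxr : cmin ^ 2 / 2 * r ≤ 1 - r := by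
    have h1 : Real.exp (cmin ^ 2 / 2) * r = 1 := by
      rw [hrdef, ← Real.exp_add]
      rw [show cmin ^ 2 / 2 + -cmin ^ 2 / 2 = 0 by ring, Real.exp_zero]
    have h2 := Real.add_one_le_exp (cmin ^ 2 / 2)
    nlinarith [hr0]
  have hstep1 : r * (1 - r)⁻¹ ≤ 2 / cmin ^ 2 := by
    rw [← div_eq_mul_inv, div_le_div_iff₀ h1r (by positivity)]
    nlinarith
  have hstep2 : r ^ T ≤ Real.exp (-cmin * B) := by
    rw [hrdef, ← Real.exp_nat_mul]
    apply Real.exp_le_exp.mpr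
    have h1 : 2 * B / cmin * (cmin ^ 2 / 2) = cmin * B := by
      field_simp
    have h2 := mul_le_mul_of_nonneg_right htR (by positivity : (0:ℝ) ≤ cmin ^ 2 / 2)
    rw [h1] at h2
    linarith
  have htail_real : (1 - r)⁻¹ * r ^ (T + 1) ≤ 2 / cmin ^ 2 * Real.exp (-cmin * B) := by
    calc (1 - r)⁻¹ * r ^ (T + 1) = r ^ T * (r * (1 - r)⁻¹) := by ring
    _ ≤ Real.exp (-cmin * B) * (2 / cmin ^ 2) := by
        apply mul_le_mul hstep2 hstep1 (by positivity) (Real.exp_pos _).le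
    _ = 2 / cmin ^ 2 * Real.exp (-cmin * B) := by ring
  -- sum the tail in ℝ≥0∞
  have hterm : ∀ n : ℕ, Real.exp (-(cmin ^ 2 * n) / 2) = r ^ n := by
    intro n
    rw [hrdef, ← Real.exp_nat_mul]
    congr 1
    ring
  have hsummable : Summable fun i : ℕ => r ^ (i + (T + 1)) := by
    simp_rw [pow_add]
    exact (summable_geometric_of_lt_one hr0.le hr1).mul_right _
  have htail : ∑' i : ℕ, μ (A (i + (T + 1)))
      ≤ ENNReal.ofReal (2 / cmin ^ 2 * Real.exp (-cmin * B)) := by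
    have hb : ∀ i : ℕ, μ (A (i + (T + 1))) ≤ ENNReal.ofReal (r ^ (i + (T + 1))) := by
      intro i
      refine le_trans (measure_mono (hA_subset _)) ?_
      rw [← hterm]
      exact hMarkov _ (by omega)
    refine le_trans (ENNReal.tsum_le_tsum hb) ?_
    rw [← ENNReal.ofReal_tsum_of_nonneg (fun i => by positivity) hsummable]
    apply ENNReal.ofReal_le_ofReal
    refine le_trans (le_of_eq ?_) htail_real
    simp_rw [pow_add]
    rw [tsum_mul_right, tsum_geometric_of_lt_one hr0.le hr1]
  -- head
  have hhead : ∑ t ∈ Finset.range (T + 1), μ (A t) ≤ ((T : ℝ≥0∞) + 1) := by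
    calc ∑ t ∈ Finset.range (T + 1), μ (A t)
        ≤ ∑ _t ∈ Finset.range (T + 1), (1 : ℝ≥0∞) :=
          Finset.sum_le_sum fun t _ => prob_le_one
    _ = ((T : ℝ≥0∞) + 1) := by
        rw [Finset.sum_const, Finset.card_range]
        simp [mul_one]
  -- assemble
  rw [hlint, ← Summable.sum_add_tsum_nat_add' (f := fun t => μ (A t)) (k := T + 1)
    ENNReal.summable]
  refine le_trans (add_le_add hhead htail) ?_
  have hofT : ((T : ℝ≥0∞) + 1) = ENNReal.ofReal ((T : ℝ) + 1) := by
    rw [ENNReal.ofReal_add (by positivity) zero_le_one, ENNReal.ofReal_natCast,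
      ENNReal.ofReal_one]
  rw [hofT, ← ENNReal.ofReal_add (by positivity) (by positivity)]
end

section
/- High-probability Pinsker inequality: for probability measures P and Q on the same measurable space and any event A, P(A) + Q(Aᶜ) ≥ (1/2)·exp(−KL(P‖Q)). -/
open MeasureTheory
open scoped ENNReal Classical

/-- The Kullback–Leibler divergence `KL(P‖Q)`, as an extended real number:
the integral of the log-likelihood ratio when `P ≪ Q` (and it is integrable),
and `+∞` otherwise. -/
noncomputable def klDiv {Ω : Type*} [MeasurableSpace Ω] (P Q : Measure Ω) : EReal :=
  if P ≪ Q ∧ Integrable (llr P Q) P then ((∫ ω, llr P Q ω ∂P : ℝ) : EReal) else ⊤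

private lemma amgm' (a b t : ℝ) (ha : 0 ≤ a) (hb : 0 ≤ b) (ht : 0 < t) :
    2 * Real.sqrt (a * b) ≤ t * a + b / t := by
  have h1 : Real.sqrt (t*a) * Real.sqrt (b/t) = Real.sqrt (a*b) := by
    rw [← Real.sqrt_mul (by positivity)]
    congr 1
    field_simp
  nlinarith [two_mul_le_add_sq (Real.sqrt (t*a)) (Real.sqrt (b/t)),
    Real.sq_sqrt (show (0:ℝ) ≤ t*a by positivity), Real.sq_sqrt (show (0:ℝ) ≤ b/t by positivity),
    Real.sqrt_nonneg (a*b)]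

private lemma exp_neg_half_log (a : ℝ) (ha : 0 < a) :
    Real.exp (-(Real.log a)/2) = (Real.sqrt a)⁻¹ := by
  rw [Real.sqrt_eq_rpow, ← Real.rpow_neg ha.le, Real.rpow_def_of_pos ha]
  ring_nf

private lemma sqrt_le_add_one (a : ℝ) (ha : 0 ≤ a) : Real.sqrt a ≤ a + 1 := by
  nlinarith [two_mul_le_add_sq 1 (Real.sqrt a), Real.sq_sqrt ha, Real.sqrt_nonneg a]

/-- High-probability Pinsker inequality: for probability measures `P, Q` and any
event `A`, `P(A) + Q(Aᶜ) ≥ (1/2)·exp(−KL(P‖Q))`. -/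
theorem stmt_16 {Ω : Type*} [MeasurableSpace Ω] (P Q : Measure Ω)
    [IsProbabilityMeasure P] [IsProbabilityMeasure Q]
    (A : Set Ω) (hA : MeasurableSet A) :
    2⁻¹ * EReal.exp (-(klDiv P Q)) ≤ P A + Q Aᶜ := by
  by_cases h : P ≪ Q ∧ Integrable (llr P Q) P
  swap
  · rw [klDiv, if_neg h]
    simp
  obtain ⟨hac, hint⟩ := h
  rw [klDiv, if_pos ⟨hac, hint⟩]
  set K : ℝ := ∫ ω, llr P Q ω ∂P with hK
  set p : Ω → ℝ := fun x ↦ (P.rnDeriv Q x).toReal with hp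
  have hp_meas : Measurable p := (Measure.measurable_rnDeriv P Q).ennreal_toReal
  have hp_nonneg : ∀ x, 0 ≤ p x := fun x ↦ ENNReal.toReal_nonneg
  have int_p : Integrable p Q := Measure.integrable_toReal_rnDeriv
  have int_p1 : Integrable (fun x ↦ p x + 1) Q := int_p.add (integrable_const 1)
  have int_sqrt : Integrable (fun x ↦ Real.sqrt (p x)) Q := by
    refine int_p1.mono' (hp_meas.sqrt.aestronglyMeasurable) ?_
    filter_upwards with x
    rw [Real.norm_of_nonneg (Real.sqrt_nonneg _)]
    exact sqrt_le_add_one _ (hp_nonneg x)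
  have int_min : Integrable (fun x ↦ min (p x) 1) Q := by
    refine (integrable_const (1:ℝ)).mono' ((hp_meas.min measurable_const).aestronglyMeasurable) ?_
    filter_upwards with x
    rw [Real.norm_of_nonneg (le_min (hp_nonneg x) one_pos.le)]
    exact min_le_right _ _
  have int_max : Integrable (fun x ↦ max (p x) 1) Q := by
    refine int_p1.mono' ((hp_meas.max measurable_const).aestronglyMeasurable) ?_
    filter_upwards with x
    rw [Real.norm_of_nonneg (le_max_of_le_right one_pos.le)]
    exact max_le (by linarith [hp_nonneg x]) (by linarith [hp_nonneg x])
  -- key pointwise: p x * exp(-(llr)/2) ≤ √(p x), with equality when p x > 0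
  have hllr : ∀ x, llr P Q x = Real.log (p x) := fun x ↦ rfl
  have hpe : ∀ x, p x * Real.exp (-(llr P Q x)/2) ≤ Real.sqrt (p x) := by
    intro x
    rcases eq_or_lt_of_le (hp_nonneg x) with h0 | h0
    · rw [← h0]; simp [Real.sqrt_nonneg]
    · rw [hllr, exp_neg_half_log _ h0]
      rw [← div_eq_mul_inv, Real.div_sqrt]
  -- integrability of p * exp(-llr/2) under Q
  have int_ph : Integrable (fun x ↦ p x * Real.exp (-(llr P Q x)/2)) Q := by
    refine int_p1.mono' ((hp_meas.mul (((measurable_llr P Q).neg.div_const 2).exp)).aestronglyMeasurable) ?_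
    filter_upwards with x
    rw [Real.norm_of_nonneg (by positivity)]
    exact (hpe x).trans (sqrt_le_add_one _ (hp_nonneg x))
  have int_h : Integrable (fun x ↦ Real.exp (-(llr P Q x)/2)) P := by
    have := (integrable_rnDeriv_smul_iff hac
      (f := fun x ↦ Real.exp (-(llr P Q x)/2))).mp
    simp only [smul_eq_mul] at this
    exact this int_ph
  -- Jensen's inequality
  have hjen : Real.exp (-K/2) ≤ ∫ x, Real.exp (-(llr P Q x)/2) ∂P := by
    have h1 : ∫ x, -(llr P Q x)/2 ∂P = -K/2 := by
      rw [integral_div, integral_neg]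
    calc Real.exp (-K/2) = Real.exp (∫ x, -(llr P Q x)/2 ∂P) := by rw [h1]
    _ ≤ ∫ x, Real.exp (-(llr P Q x)/2) ∂P :=
        convexOn_exp.map_integral_le Real.continuous_exp.continuousOn isClosed_univ
          (Filter.Eventually.of_forall fun x ↦ Set.mem_univ _) ((hint.neg).div_const 2) int_h
  set c : ℝ := Real.exp (-K/2) with hc
  have hc_pos : 0 < c := Real.exp_pos _
  have hcs : c ≤ ∫ x, Real.sqrt (p x) ∂Q := by
    calc c ≤ ∫ x, Real.exp (-(llr P Q x)/2) ∂P := hjen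
    _ = ∫ x, p x • Real.exp (-(llr P Q x)/2) ∂Q := (integral_rnDeriv_smul hac).symm
    _ ≤ ∫ x, Real.sqrt (p x) ∂Q := by
        simp only [smul_eq_mul]
        exact integral_mono int_ph int_sqrt hpe
  set m : ℝ := ∫ x, min (p x) 1 ∂Q with hm
  have hm_nonneg : 0 ≤ m :=
    integral_nonneg fun x ↦ le_min (hp_nonneg x) one_pos.le
  have hM : ∫ x, max (p x) 1 ∂Q ≤ 2 := by
    calc ∫ x, max (p x) 1 ∂Q ≤ ∫ x, p x + 1 ∂Q := by
          refine integral_mono int_max int_p1 fun x ↦ ?_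
          exact max_le (by linarith [hp_nonneg x]) (by linarith [hp_nonneg x])
    _ = (∫ x, p x ∂Q) + 1 := by
          rw [integral_add int_p (integrable_const 1)]; simp
    _ = 2 := by rw [Measure.integral_toReal_rnDeriv hac]; norm_num
  have key : c^2 ≤ 2 * m := by
    have hs2 : 2 * c ≤ (2/c) * m + (c/2) * ∫ x, max (p x) 1 ∂Q := by
      calc 2*c ≤ 2 * ∫ x, Real.sqrt (p x) ∂Q := by linarith
      _ = ∫ x, 2 * Real.sqrt (p x) ∂Q := by simp_rw [← smul_eq_mul, integral_smul]
      _ ≤ ∫ x, (2/c) * min (p x) 1 + (c/2) * max (p x) 1 ∂Q := by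
          refine integral_mono (int_sqrt.const_mul 2)
            ((int_min.const_mul _).add (int_max.const_mul _)) fun x ↦ ?_
          have h := amgm' (min (p x) 1) (max (p x) 1) (2/c)
            (le_min (hp_nonneg x) one_pos.le) (le_max_of_le_right one_pos.le) (by positivity)
          rw [min_mul_max, mul_one] at h
          refine h.trans (le_of_eq ?_)
          rw [div_div_eq_mul_div]
          ring_nf
      _ = (2/c) * m + (c/2) * ∫ x, max (p x) 1 ∂Q := by
          rw [integral_add (int_min.const_mul _) (int_max.const_mul _)]
          simp_rw [← smul_eq_mul, integral_smul]
          rfl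
    have h3 : 2 * c ≤ (2/c) * m + (c/2) * 2 := by nlinarith
    have h4 : c ≤ (2/c) * m := by linarith
    have h5 := mul_le_mul_of_nonneg_right h4 hc_pos.le
    have h6 : (2/c) * m * c = 2 * m := by field_simp
    nlinarith
  have hmA : m ≤ (P A).toReal + (Q Aᶜ).toReal := by
    have hsplit : (∫ x in A, min (p x) 1 ∂Q) + (∫ x in Aᶜ, min (p x) 1 ∂Q) = m :=
      integral_add_compl hA int_min
    have h1 : ∫ x in A, min (p x) 1 ∂Q ≤ (P A).toReal := by
      change ∫ x in A, min (p x) 1 ∂Q ≤ P.real A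
      rw [← Measure.setIntegral_toReal_rnDeriv hac A]
      exact setIntegral_mono_on int_min.integrableOn int_p.integrableOn hA
        (fun x _ ↦ min_le_left _ _)
    have h2 : ∫ x in Aᶜ, min (p x) 1 ∂Q ≤ (Q Aᶜ).toReal := by
      calc ∫ x in Aᶜ, min (p x) 1 ∂Q ≤ ∫ _x in Aᶜ, (1:ℝ) ∂Q :=
            setIntegral_mono_on int_min.integrableOn (integrable_const 1).integrableOn
              hA.compl (fun x _ ↦ min_le_right _ _)
      _ = (Q Aᶜ).toReal := by simp; rfl
    linarith
  have hreal : 2⁻¹ * Real.exp (-K) ≤ (P A).toReal + (Q Aᶜ).toReal := by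
    have hcc : c^2 = Real.exp (-K) := by
      rw [hc, sq, ← Real.exp_add]
      ring_nf
    nlinarith
  have hcast : (-(K:ℝ) : EReal) = ((-K : ℝ) : EReal) := by norm_cast
  rw [hcast, EReal.exp_coe]
  calc (2⁻¹:ℝ≥0∞) * ENNReal.ofReal (Real.exp (-K))
      = ENNReal.ofReal (2⁻¹ * Real.exp (-K)) := by
        rw [ENNReal.ofReal_mul (by norm_num)]
        congr 1
        rw [ENNReal.ofReal_inv_of_pos two_pos]
        norm_num
  _ ≤ ENNReal.ofReal ((P A).toReal + (Q Aᶜ).toReal) := ENNReal.ofReal_le_ofReal hreal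
  _ = P A + Q Aᶜ := by
      rw [ENNReal.ofReal_add ENNReal.toReal_nonneg ENNReal.toReal_nonneg,
        ENNReal.ofReal_toReal (measure_ne_top _ _), ENNReal.ofReal_toReal (measure_ne_top _ _)]
end
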